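/- Let W_s ∈ ℝ^{N×p}, W_r ∈ ℝ^{N×q}, and V ∈ ℝ^{N×m}, with W_sᵀ·W_r = 0, and suppose W_sᵀW_s, W_rᵀW_r, and VᵀV are invertible. Let W = (W_s, W_r) be the horizontal concatenation. Then tr((WᵀW)⁻¹ WᵀV (VᵀV)⁻¹ VᵀW) = tr((W_sᵀW_s)⁻¹ W_sᵀV (VᵀV)⁻¹ VᵀW_s) + tr((W_rᵀW_r)⁻¹ W_rᵀV (VᵀV)⁻¹ VᵀW_r). -/

import Mathlib

open Matrix

lemma trace_fromBlocks_aux {α : Type*} [AddCommMonoid α] {n₁ n₂ : Type*} [Fintype n₁] [Fintype n₂]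
    (A : Matrix n₁ n₁ α) (B : Matrix n₁ n₂ α) (C : Matrix n₂ n₁ α) (D : Matrix n₂ n₂ α) :
    trace (fromBlocks A B C D) = trace A + trace D := by
  simp [Matrix.trace, Fintype.sum_sum_type, fromBlocks, Matrix.diag]

/-- For orthogonal blocks `W_s ⊥ W_r`, the SSC of the concatenation `(W_s, W_r)` with `V`
splits as the sum of the SSCs of each block with `V`. -/
theorem ssc_orthogonal_split {N p q m : ℕ}
    (Ws : Matrix (Fin N) (Fin p) ℝ) (Wr : Matrix (Fin N) (Fin q) ℝ)
    (V : Matrix (Fin N) (Fin m) ℝ)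
    (horth : Wsᵀ * Wr = 0)
    (hWs : IsUnit (Wsᵀ * Ws)) (hWr : IsUnit (Wrᵀ * Wr)) (hVV : IsUnit (Vᵀ * V)) :
    trace (((fromCols Ws Wr)ᵀ * fromCols Ws Wr)⁻¹ * (fromCols Ws Wr)ᵀ * V
        * (Vᵀ * V)⁻¹ * Vᵀ * fromCols Ws Wr)
      = trace ((Wsᵀ * Ws)⁻¹ * Wsᵀ * V * (Vᵀ * V)⁻¹ * Vᵀ * Ws)
        + trace ((Wrᵀ * Wr)⁻¹ * Wrᵀ * V * (Vᵀ * V)⁻¹ * Vᵀ * Wr) := by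
  have horth' : Wrᵀ * Ws = 0 := by
    have := congrArg Matrix.transpose horth
    simpa [Matrix.transpose_mul] using this
  have hgram : (fromCols Ws Wr)ᵀ * fromCols Ws Wr
      = fromBlocks (Wsᵀ * Ws) 0 0 (Wrᵀ * Wr) := by
    rw [transpose_fromCols, fromRows_mul_fromCols, horth, horth']
  have hinv : ((fromCols Ws Wr)ᵀ * fromCols Ws Wr)⁻¹
      = fromBlocks (Wsᵀ * Ws)⁻¹ 0 0 (Wrᵀ * Wr)⁻¹ := by
    rw [hgram, inv_fromBlocks_zero₂₁_of_isUnit_iff _ _ _ (iff_of_true hWs hWr)]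
    simp
  rw [hinv, transpose_fromCols, fromBlocks_mul_fromRows]
  rw [fromRows_mul, fromRows_mul, fromRows_mul, fromRows_mul_fromCols,
    trace_fromBlocks_aux]
  simp [Matrix.mul_assoc]
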